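/- Let Σ_Γ be a subshift of finite type without isolated points or empty cones, let E ⊆ Σ_Γ be a nonempty clopen set, and let G ≤ R_{Γ,E} be an RSG whose nucleus 𝒩_G is finite. Let ω ∈ E be a rational point. Then the group of germs [G]_ω is virtually infinite cyclic. -/

import Mathlib

open scoped Classical

noncomputable section

/-- A finite directed graph (loops and parallel edges are allowed). -/
structure FinDigraph : Type 1 where
  V : Type
  E : Type
  [fintypeV : Fintype V]
  [fintypeE : Fintype E]
  o : E → V
  t : E → V

attribute [instance] FinDigraph.fintypeV FinDigraph.fintypeE

instance (Γ : FinDigraph) : TopologicalSpace Γ.E := ⊥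
instance (Γ : FinDigraph) : DiscreteTopology Γ.E := ⟨rfl⟩

namespace FinDigraph

variable (Γ : FinDigraph)

/-- The subshift of finite type `Σ_Γ`: the set of all infinite directed paths in `Γ`,
viewed as a subset of the product space of all edge sequences (each edge's terminus is
the origin of the next edge). -/
def shift : Set (ℕ → Γ.E) := {x | ∀ i, Γ.t (x i) = Γ.o (x (i + 1))}

/-- Validity of a finite directed path starting at a given node. -/
def pathOk : Γ.V → List Γ.E → Prop
  | _, [] => True
  | v, e :: l => Γ.o e = v ∧ pathOk (Γ.t e) l

/-- A finite directed path in `Γ` (a node together with a compatible list of edges;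
a path with no edges is a node, regarded as a path of length `0`). -/
structure FinPath where
  start : Γ.V
  edges : List Γ.E
  ok : Γ.pathOk start edges

/-- Terminus of a list of edges starting at a given node. -/
def pathEndAux : Γ.V → List Γ.E → Γ.V
  | v, [] => v
  | _, e :: l => pathEndAux (Γ.t e) l

/-- The terminus `t(α)` of a finite directed path. -/
def pathEnd (α : Γ.FinPath) : Γ.V := Γ.pathEndAux α.start α.edges

/-- The length-0 path at a node `v`. -/
def trivPath (v : Γ.V) : Γ.FinPath := ⟨v, [], by simp [pathOk]⟩

/-- The cone `C_α ⊆ Σ_Γ` of all infinite directed paths having `α` as a prefix. -/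
def cone (α : Γ.FinPath) : Set (ℕ → Γ.E) :=
  {x | x ∈ Γ.shift ∧ Γ.o (x 0) = α.start ∧
    ∀ (i : ℕ) (h : i < α.edges.length), x i = α.edges.get ⟨i, h⟩}

/-- The canonical similarity `C_α → C_β` (for `t(α) = t(β)`) on the level of edge
sequences: delete the prefix `α` and attach the prefix `β`. -/
def splice (α β : Γ.FinPath) (x : ℕ → Γ.E) : ℕ → Γ.E := fun i =>
  if h : i < β.edges.length then β.edges.get ⟨i, h⟩
  else x (i - β.edges.length + α.edges.length)

/-- Concatenation `α · ω` of a finite path with an infinite path (on sequences). -/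
def catPath (α : Γ.FinPath) (x : ℕ → Γ.E) : ℕ → Γ.E :=
  Γ.splice (Γ.trivPath (Γ.pathEnd α)) α x

/-- The length of the path `f̄(α)`, i.e. of the greatest common prefix of all points
of `f(C_α)`. -/
def barLen (f : (ℕ → Γ.E) → ℕ → Γ.E) (α : Γ.FinPath) : ℕ :=
  sSup {n | ∀ x ∈ Γ.cone α, ∀ y ∈ Γ.cone α, ∀ i < n, f x i = f y i}

/-- The local action `f|_α : C_{t(α)} → C_{t(f̄(α))}`, determined by
`f(α·ω) = f̄(α)·(f|_α)(ω)`.  It is recorded together with the node `t(α)`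
(the node of its domain cone), and is extended by the identity off the cone
`C_{t(α)}`. -/
def localAction (f : (ℕ → Γ.E) → ℕ → Γ.E) (α : Γ.FinPath) :
    Γ.V × ((ℕ → Γ.E) → ℕ → Γ.E) :=
  (Γ.pathEnd α, fun w =>
    if w ∈ Γ.cone (Γ.trivPath (Γ.pathEnd α)) then
      fun i => f (Γ.catPath α w) (i + Γ.barLen f α)
    else w)

/-- A map is rational (on a domain `D`) if it has only finitely many distinct local
actions at cones contained in `D`. -/
def RationalOn (f : (ℕ → Γ.E) → ℕ → Γ.E) (D : Set (ℕ → Γ.E)) : Prop :=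
  (Γ.localAction f '' {α : Γ.FinPath | Γ.cone α ⊆ D}).Finite

/-- The nucleus `𝒩_f` of a map: the set of local actions `f|_α` that occur for
infinitely many finite paths `α` with `C_α` contained in the domain. -/
def nucleusOf (f : (ℕ → Γ.E) → ℕ → Γ.E) (D : Set (ℕ → Γ.E)) :
    Set (Γ.V × ((ℕ → Γ.E) → ℕ → Γ.E)) :=
  {p | {α : Γ.FinPath | Γ.cone α ⊆ D ∧ Γ.localAction f α = p}.Infinite}

/-- A nondegenerate map on `Σ_Γ` with domain `D`: it takes values in `Σ_Γ` and maps no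
cone contained in `D` to a single point. -/
def Nondegenerate (f : (ℕ → Γ.E) → ℕ → Γ.E) (D : Set (ℕ → Γ.E)) : Prop :=
  (∀ x ∈ D, f x ∈ Γ.shift) ∧
  ∀ α : Γ.FinPath, Γ.cone α ⊆ D → ¬∃ p, ∀ x ∈ Γ.cone α, f x = p

/-- Extension of a map `E → E'` between subsets of the sequence space to a globally
defined map (by the identity off `E`). -/
def homExt (E E' : Set (ℕ → Γ.E)) (f : ↥E → ↥E') : (ℕ → Γ.E) → ℕ → Γ.E :=
  fun x => if h : x ∈ E then ↑(f ⟨x, h⟩) else x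

/-- Extension of a permutation of `E` to a globally defined map. -/
def permExt (E : Set (ℕ → Γ.E)) (g : Equiv.Perm ↥E) : (ℕ → Γ.E) → ℕ → Γ.E :=
  Γ.homExt E E ⇑g

/-- `E` is a clopen subset of the subshift `Σ_Γ`. -/
def ClopenIn (E : Set (ℕ → Γ.E)) : Prop :=
  IsClopen {x : ↥Γ.shift | (x : ℕ → Γ.E) ∈ E}

/-- `U ⊆ Σ_Γ` is open in the subshift. -/
def OpenInShift (U : Set (ℕ → Γ.E)) : Prop :=
  IsOpen {x : ↥Γ.shift | (x : ℕ → Γ.E) ∈ U}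

/-- The subshift `Σ_Γ` has no isolated points. -/
def NoIsolatedPoints : Prop := ∀ x : ↥Γ.shift, ¬IsOpen ({x} : Set ↥Γ.shift)

/-- The subshift `Σ_Γ` has no empty cones. -/
def NoEmptyCones : Prop := ∀ α : Γ.FinPath, (Γ.cone α).Nonempty

/-- A permutation of `E` which is a homeomorphism and is a rational map:
an element of the rational group `R_{Γ,E}`. -/
def IsRatHomeo (E : Set (ℕ → Γ.E)) (g : Equiv.Perm ↥E) : Prop :=
  Continuous ⇑g ∧ Continuous ⇑g.symm ∧ Γ.RationalOn (Γ.permExt E g) E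

/-- `g` maps the cone `C_α` to the cone `C_β` by the canonical similarity
`α·ω ↦ β·ω`. -/
def RealizesCanonSim (E : Set (ℕ → Γ.E)) (g : Equiv.Perm ↥E) (α β : Γ.FinPath) : Prop :=
  ∀ x, ∀ hx : x ∈ E, x ∈ Γ.cone α → ↑(g ⟨x, hx⟩) = Γ.splice α β x

/-- A rational similarity group (RSG): a subgroup of the rational group `R_{Γ,E}` that
realizes the canonical similarity between any two cones `C_α, C_β ⊊ E` with
`t(α) = t(β)`. -/
def IsRSG (E : Set (ℕ → Γ.E)) (G : Subgroup (Equiv.Perm ↥E)) : Prop :=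
  (∀ g ∈ G, Γ.IsRatHomeo E g) ∧
  ∀ α β : Γ.FinPath, Γ.pathEnd α = Γ.pathEnd β → Γ.cone α ⊂ E → Γ.cone β ⊂ E →
    ∃ g ∈ G, Γ.RealizesCanonSim E g α β

/-- `h` locally agrees with the group `G`: every point has an open neighborhood on
which `h` coincides with some element of `G`. -/
def LocallyAgrees (E : Set (ℕ → Γ.E)) (G : Subgroup (Equiv.Perm ↥E))
    (h : Equiv.Perm ↥E) : Prop :=
  ∀ x : ↥E, ∃ U : Set ↥E, IsOpen U ∧ x ∈ U ∧ ∃ g ∈ G, ∀ u ∈ U, h u = g u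

/-- `G` is full as a group of homeomorphisms of `E`: every homeomorphism of `E` that
locally agrees with `G` already belongs to `G`. -/
def IsFullOn (E : Set (ℕ → Γ.E)) (G : Subgroup (Equiv.Perm ↥E)) : Prop :=
  ∀ h : Equiv.Perm ↥E, Continuous ⇑h → Continuous ⇑h.symm →
    Γ.LocallyAgrees E G h → h ∈ G

/-- The nucleus `𝒩_G` of a subgroup `G ≤ R_{Γ,E}`: the union of the nuclei of its
elements. -/
def groupNucleus (E : Set (ℕ → Γ.E)) (G : Subgroup (Equiv.Perm ↥E)) :
    Set (Γ.V × ((ℕ → Γ.E) → ℕ → Γ.E)) :=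
  ⋃ g ∈ G, Γ.nucleusOf (Γ.permExt E g) E

/-- An edge of the induced subgraph on a set `W` of nodes. -/
def InducedEdge (W : Set Γ.V) (e : Γ.E) : Prop := Γ.o e ∈ W ∧ Γ.t e ∈ W

/-- A path of the induced subgraph on `W`. -/
def PathIn (W : Set Γ.V) (α : Γ.FinPath) : Prop :=
  α.start ∈ W ∧ ∀ e ∈ α.edges, Γ.InducedEdge W e

/-- The induced subgraph on `W` is strongly connected and is not a directed cycle,
i.e. `Σ_{Γ₀}` is irreducible (where `Γ₀` is the induced subgraph on `W`). -/
def IrreducibleOn (W : Set Γ.V) : Prop :=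
  (∀ v ∈ W, ∀ w ∈ W, ∃ α : Γ.FinPath,
      α.start = v ∧ Γ.pathEnd α = w ∧ α.edges ≠ [] ∧ Γ.PathIn W α) ∧
  ¬∀ v ∈ W, ∃! e : Γ.E, Γ.InducedEdge W e ∧ Γ.o e = v

/-- `Σ_Γ` has an irreducible core: an induced subgraph `Γ₀` (on a node set `W`) with
`Σ_{Γ₀}` irreducible, such that every node has a directed path to `Γ₀` and every
sufficiently long directed path ends in `Γ₀`. -/
def HasIrreducibleCore : Prop :=
  ∃ W : Set Γ.V, Γ.IrreducibleOn W ∧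
    (∀ v : Γ.V, ∃ α : Γ.FinPath, α.start = v ∧ Γ.pathEnd α ∈ W) ∧
    ∃ N : ℕ, ∀ α : Γ.FinPath, α.edges.length = N → Γ.pathEnd α ∈ W

/-- `G ≤ R_{Γ,E}` is contracting: `Σ_Γ` has an irreducible core and the nucleus `𝒩_G`
is finite. -/
def IsContracting (E : Set (ℕ → Γ.E)) (G : Subgroup (Equiv.Perm ↥E)) : Prop :=
  Γ.HasIrreducibleCore ∧ (Γ.groupNucleus E G).Finite

/-- An element of the Thompson group `V_{Γ,E}`: there are partitions of `E` into cones
`C_{α_1},…,C_{α_k}` and `C_{β_1},…,C_{β_k}` with `t(α_i) = t(β_i)` such that `g` maps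
each `C_{α_i}` to `C_{β_i}` by the canonical similarity. -/
def IsThompson (E : Set (ℕ → Γ.E)) (g : Equiv.Perm ↥E) : Prop :=
  ∃ (k : ℕ) (α β : Fin k → Γ.FinPath),
    (∀ i, Γ.pathEnd (α i) = Γ.pathEnd (β i)) ∧
    E = (⋃ i, Γ.cone (α i)) ∧
    Pairwise (fun i j => Disjoint (Γ.cone (α i)) (Γ.cone (α j))) ∧
    E = (⋃ i, Γ.cone (β i)) ∧
    Pairwise (fun i j => Disjoint (Γ.cone (β i)) (Γ.cone (β j))) ∧
    ∀ i, Γ.RealizesCanonSim E g (α i) (β i)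

/-- A rational (eventually repeating) point `σ·τ^∞` of `Σ_Γ`. -/
def IsRationalPt (x : ℕ → Γ.E) : Prop :=
  ∃ σ τ : Γ.FinPath, τ.edges ≠ [] ∧
    (∀ (i : ℕ) (h : i < σ.edges.length), x i = σ.edges.get ⟨i, h⟩) ∧
    ∀ i : ℕ, σ.edges.length ≤ i →
      ∀ h : (i - σ.edges.length) % τ.edges.length < τ.edges.length,
        x i = τ.edges.get ⟨(i - σ.edges.length) % τ.edges.length, h⟩

/-- `β = f̄(α)`: the cone `C_β` is the smallest cone containing `f(C_α)`, with `β` the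
greatest common prefix of the points of `f(C_α)`. -/
def IsBar (f : (ℕ → Γ.E) → ℕ → Γ.E) (α β : Γ.FinPath) : Prop :=
  f '' Γ.cone α ⊆ Γ.cone β ∧
  ∀ γ : Γ.FinPath, f '' Γ.cone α ⊆ Γ.cone γ →
    Γ.cone β ⊆ Γ.cone γ ∧ γ.edges.length ≤ β.edges.length

end FinDigraph
/-- `g` is the identity on some open neighborhood of `x` in `E`. -/
def LocTrivAt {X : Type} [TopologicalSpace X] (g : Equiv.Perm X) (x : X) : Prop :=
  ∃ U : Set X, IsOpen U ∧ x ∈ U ∧ ∀ u ∈ U, g u = u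

namespace RGAux

open FinDigraph

lemma infinite_exists_ge {s : Set ℕ} (hs : s.Infinite) (m : ℕ) : ∃ n ∈ s, m ≤ n := by
  by_contra h
  push_neg at h
  exact hs (Set.Finite.subset (Set.finite_Iio m) (fun n hn => h n hn))

lemma exists_infinite_fiber {β : Type*} (g : ℕ → β) (s : Set ℕ) (hs : s.Infinite)
    (hfin : (g '' s).Finite) : ∃ b, {n | n ∈ s ∧ g n = b}.Infinite := by
  by_contra h
  push_neg at h
  have hsub : s ⊆ ⋃ b ∈ g '' s, {n | n ∈ s ∧ g n = b} := by
    intro n hn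
    exact Set.mem_biUnion ⟨n, hn, rfl⟩ ⟨hn, rfl⟩
  have hfin2 : (⋃ b ∈ g '' s, {n | n ∈ s ∧ g n = b}).Finite :=
    Set.Finite.biUnion hfin (fun b _ => (h b))
  exact hs (hfin2.subset hsub)

lemma per_add {A : Type*} {ω : ℕ → A} {s L : ℕ}
    (hper : ∀ i, s ≤ i → ω (i + L) = ω i) :
    ∀ p, s ≤ p → ∀ k, ω (p + k * L) = ω p := by
  intro p hp k
  induction k with
  | zero => simp
  | succ k ih =>
      have e : p + (k + 1) * L = (p + k * L) + L := by ring
      rw [e, hper _ (le_trans hp (Nat.le_add_right _ _)), ih]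

lemma per_mod {A : Type*} {ω : ℕ → A} {s L : ℕ} (hL : 0 < L)
    (hper : ∀ i, s ≤ i → ω (i + L) = ω i) :
    ∀ p q, s ≤ p → s ≤ q → p % L = q % L → ω p = ω q := by
  have key : ∀ p q, p ≤ q → s ≤ p → p % L = q % L → ω q = ω p := by
    intro p q hpq hp hmod
    obtain ⟨k, hk⟩ := (Nat.modEq_iff_dvd' hpq).mp hmod
    have hq : q = p + k * L := by rw [mul_comm, ← hk]; omega
    rw [hq]
    exact per_add hper p hp k
  intro p q hp hq hmod
  rcases le_total p q with h | h
  · exact (key p q h hp hmod).symm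
  · exact key q p h hq hmod.symm

lemma modsub {L p q : ℕ} (hpq : q ≤ p) (hmod : p % L = q % L) : ∃ k, p = q + k * L := by
  obtain ⟨k, hk⟩ := (Nat.modEq_iff_dvd' hpq).mp hmod.symm
  exact ⟨k, by rw [mul_comm, ← hk]; omega⟩

lemma cylOpen (Γ : FinDigraph) (ω : ℕ → Γ.E) (n : ℕ) :
    IsOpen {x : ℕ → Γ.E | ∀ i, i < n → x i = ω i} := by
  have he : {x : ℕ → Γ.E | ∀ i, i < n → x i = ω i}
      = Set.pi (Set.Iio n) (fun i => {ω i}) := by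
    ext x
    simp [Set.mem_pi]
  rw [he]
  exact isOpen_set_pi (Set.finite_Iio n) (fun i _ => isOpen_discrete _)

lemma cylinder_sub (Γ : FinDigraph) (S : Set (ℕ → Γ.E)) (ω : ℕ → Γ.E) (hω : ω ∈ S)
    {U : Set ↥S} (hU : IsOpen U) (hωU : (⟨ω, hω⟩ : ↥S) ∈ U) :
    ∃ n, ∀ x (hx : x ∈ S), (∀ i, i < n → x i = ω i) → (⟨x, hx⟩ : ↥S) ∈ U := by
  obtain ⟨V, hV, rfl⟩ := isOpen_induced_iff.mp hU
  have hωV : ω ∈ V := hωU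
  obtain ⟨I, u, hu, hsub⟩ := isOpen_pi_iff.mp hV ω hωV
  refine ⟨(I.sup id) + 1, fun x hx hagr => ?_⟩
  have hmem : x ∈ (↑I : Set ℕ).pi u := by
    intro i hi
    have hi' : i ∈ I := hi
    have hle : i ≤ I.sup id := Finset.le_sup (f := id) hi'
    rw [hagr i (by omega)]
    exact (hu i hi').2
  exact hsub hmem

lemma helper_tail {A : Type*} {ω x y : ℕ → A} {s L N mm n₁ n₂ : ℕ} (hL : 0 < L)
    (hper : ∀ i, s ≤ i → ω (i + L) = ω i)
    (h1 : ∀ i, i < mm → y i = ω i) (h2 : ∀ i, y (i + mm) = x (i + N))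
    (hx : ∀ i, i < N → x i = ω i)
    (hsum : N + n₂ = mm + n₁) (hmod : n₁ % L = n₂ % L)
    (hs₁ : s ≤ n₁) (hs₂ : s ≤ n₂) (hn₁N : n₁ ≤ N) (hn₂ : n₂ ≤ mm) :
    ∀ i, y (i + n₂) = x (i + n₁) := by
  intro i
  by_cases hc : i + n₂ < mm
  · rw [h1 _ hc, hx _ (by omega)]
    exact per_mod hL hper _ _ (by omega) (by omega) ((Nat.ModEq.add_left i hmod).symm)
  · rw [show i + n₂ = (i + n₂ - mm) + mm by omega, h2, show i + n₂ - mm + N = i + n₁ by omega]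


end RGAux

namespace RGAux

open FinDigraph

variable {Γ : FinDigraph} {ω : ℕ → Γ.E}

lemma pathOk_ofFn (hω : ω ∈ Γ.shift) :
    ∀ (n j : ℕ), Γ.pathOk (Γ.o (ω j)) (List.ofFn (fun i : Fin n => ω (j + i))) := by
  intro n
  induction n with
  | zero => intro j; simp [FinDigraph.pathOk]
  | succ n ih =>
      intro j
      rw [List.ofFn_succ]
      refine ⟨by simp, ?_⟩
      have hfun : (fun i : Fin n => ω (j + ↑(i.succ))) = fun i : Fin n => ω ((j + 1) + ↑i) := by
        funext i
        congr 1
        simp [Fin.val_succ]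
        omega
      simp only [Fin.val_zero, Nat.add_zero]
      rw [hω j, hfun]
      exact ih (j + 1)

/-- The prefix path of `ω` of length `n`. -/
def ppath (Γ : FinDigraph) (ω : ℕ → Γ.E) (hω : ω ∈ Γ.shift) (n : ℕ) : Γ.FinPath :=
  ⟨Γ.o (ω 0), List.ofFn (fun i : Fin n => ω i), by
    have := pathOk_ofFn hω n 0
    simpa using this⟩

lemma ppath_len (hω : ω ∈ Γ.shift) (n : ℕ) : (ppath Γ ω hω n).edges.length = n := by
  simp [ppath]

lemma ppath_get (hω : ω ∈ Γ.shift) (n i : ℕ) (h : i < (ppath Γ ω hω n).edges.length) :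
    (ppath Γ ω hω n).edges.get ⟨i, h⟩ = ω i := by
  simp [ppath, List.get_ofFn]

lemma pathEndAux_ofFn (hω : ω ∈ Γ.shift) :
    ∀ (n j : ℕ), Γ.pathEndAux (Γ.o (ω j)) (List.ofFn (fun i : Fin n => ω (j + i))) = Γ.o (ω (j + n)) := by
  intro n
  induction n with
  | zero => intro j; simp [FinDigraph.pathEndAux]
  | succ n ih =>
      intro j
      rw [List.ofFn_succ]
      have hfun : (fun i : Fin n => ω (j + ↑(i.succ))) = fun i : Fin n => ω ((j + 1) + ↑i) := by
        funext i
        congr 1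
        simp [Fin.val_succ]
        omega
      show Γ.pathEndAux (Γ.t (ω (j + ↑(0 : Fin (n+1))))) _ = _
      simp only [Fin.val_zero, Nat.add_zero]
      rw [hω j, hfun]
      have := ih (j + 1)
      rw [this]
      congr 2
      omega

lemma ppath_end (hω : ω ∈ Γ.shift) (n : ℕ) : Γ.pathEnd (ppath Γ ω hω n) = Γ.o (ω n) := by
  have := pathEndAux_ofFn hω n 0
  simp only [Nat.zero_add] at this
  show Γ.pathEndAux (Γ.o (ω 0)) _ = _
  have hfun : (fun i : Fin n => ω ↑i) = fun i : Fin n => ω (0 + ↑i) := by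
    funext i; simp
  rw [show (ppath Γ ω hω n).edges = List.ofFn (fun i : Fin n => ω ↑i) from rfl, hfun]
  simpa using pathEndAux_ofFn hω n 0

lemma mem_ppath_cone (hω : ω ∈ Γ.shift) (n : ℕ) (x : ℕ → Γ.E) :
    x ∈ Γ.cone (ppath Γ ω hω n) ↔
      (x ∈ Γ.shift ∧ Γ.o (x 0) = Γ.o (ω 0) ∧ ∀ i, i < n → x i = ω i) := by
  constructor
  · rintro ⟨h1, h2, h3⟩
    refine ⟨h1, h2, fun i hi => ?_⟩
    have hi' : i < (ppath Γ ω hω n).edges.length := by rw [ppath_len]; exact hi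
    rw [h3 i hi', ppath_get]
  · rintro ⟨h1, h2, h3⟩
    refine ⟨h1, h2, fun i hi => ?_⟩
    rw [ppath_get, h3 i (by rw [ppath_len] at hi; exact hi)]

lemma mem_triv_cone (v : Γ.V) (x : ℕ → Γ.E) :
    x ∈ Γ.cone (Γ.trivPath v) ↔ (x ∈ Γ.shift ∧ Γ.o (x 0) = v) := by
  constructor
  · rintro ⟨h1, h2, _⟩
    exact ⟨h1, h2⟩
  · rintro ⟨h1, h2⟩
    refine ⟨h1, h2, fun i hi => ?_⟩
    exact absurd hi (by simp [FinDigraph.trivPath])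

lemma splice_ppath_eval (hω : ω ∈ Γ.shift) (A B : ℕ) (x : ℕ → Γ.E) (i : ℕ) :
    Γ.splice (ppath Γ ω hω A) (ppath Γ ω hω B) x i
      = if i < B then ω i else x (i - B + A) := by
  show (if h : i < (ppath Γ ω hω B).edges.length then _ else
      x (i - (ppath Γ ω hω B).edges.length + (ppath Γ ω hω A).edges.length)) = _
  by_cases h : i < B
  · rw [dif_pos (by rw [ppath_len]; exact h), if_pos h, ppath_get]
  · rw [dif_neg (by rw [ppath_len]; exact h), if_neg h, ppath_len, ppath_len]

lemma catPath_ppath_eval (hω : ω ∈ Γ.shift) (n : ℕ) (w : ℕ → Γ.E) (i : ℕ) :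
    Γ.catPath (ppath Γ ω hω n) w i = if i < n then ω i else w (i - n) := by
  show Γ.splice (Γ.trivPath (Γ.pathEnd (ppath Γ ω hω n))) (ppath Γ ω hω n) w i = _
  show (if h : i < (ppath Γ ω hω n).edges.length then _ else
      w (i - (ppath Γ ω hω n).edges.length + (Γ.trivPath (Γ.pathEnd (ppath Γ ω hω n))).edges.length)) = _
  by_cases h : i < n
  · rw [dif_pos (by rw [ppath_len]; exact h), if_pos h, ppath_get]
  · rw [dif_neg (by rw [ppath_len]; exact h), if_neg h, ppath_len]
    show w (i - n + 0) = w (i - n)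
    rw [Nat.add_zero]

lemma ppath_inj (hω : ω ∈ Γ.shift) {n₁ n₂ : ℕ} (h : ppath Γ ω hω n₁ = ppath Γ ω hω n₂) :
    n₁ = n₂ := by
  have := congrArg (fun α : Γ.FinPath => α.edges.length) h
  simpa [ppath_len] using this

end RGAux

open RGAux

set_option maxHeartbeats 2000000

/-- If `G ≤ R_{Γ,E}` is an RSG with finite nucleus and `ω ∈ E` is a rational point,
then the group of germs `[G]_ω = Stab_G(ω)/Fix⁰_G(ω)` is virtually infinite cyclic:
there is an `f ∈ Stab_G(ω)` whose germ at `ω` has infinite order and whose germ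
generates a finite-index cyclic subgroup of the group of germs. -/
theorem germ_group_virtually_infinite_cyclic (Γ : FinDigraph)
    (hiso : Γ.NoIsolatedPoints) (hcones : Γ.NoEmptyCones)
    (E : Set (ℕ → Γ.E)) (hEsub : E ⊆ Γ.shift) (hEne : E.Nonempty)
    (hEclopen : Γ.ClopenIn E)
    (G : Subgroup (Equiv.Perm ↥E)) (hRSG : Γ.IsRSG E G)
    (hnuc : (Γ.groupNucleus E G).Finite)
    (ω : ℕ → Γ.E) (hωE : ω ∈ E) (hω : Γ.IsRationalPt ω) :
    ∃ f : Equiv.Perm ↥E, f ∈ G ∧ f ⟨ω, hωE⟩ = ⟨ω, hωE⟩ ∧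
      (∀ k : ℤ, k ≠ 0 → ¬LocTrivAt (f ^ k) (⟨ω, hωE⟩ : ↥E)) ∧
      ∃ F : Set (Equiv.Perm ↥E), F.Finite ∧
        (∀ u ∈ F, u ∈ G ∧ u ⟨ω, hωE⟩ = ⟨ω, hωE⟩) ∧
        ∀ h : Equiv.Perm ↥E, h ∈ G → h ⟨ω, hωE⟩ = ⟨ω, hωE⟩ →
          ∃ k : ℤ, ∃ u ∈ F, LocTrivAt ((f ^ k * u)⁻¹ * h) (⟨ω, hωE⟩ : ↥E) := by
  classical
  have hωsh : ω ∈ Γ.shift := hEsub hωE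
  obtain ⟨σ, τ, hτ, hpre, hpost⟩ := hω
  set s := σ.edges.length with hs
  set L := τ.edges.length with hLdef
  have hL : 0 < L := List.length_pos_iff.mpr hτ
  -- periodicity of ω
  have hper : ∀ i, s ≤ i → ω (i + L) = ω i := by
    intro i hi
    have h1 := hpost i hi (Nat.mod_lt _ hL)
    have h2 := hpost (i + L) (by omega) (Nat.mod_lt _ hL)
    rw [h1, h2]
    congr 1
    apply Fin.ext
    show (i + L - s) % L = (i - s) % L
    rw [show i + L - s = (i - s) + L by omega, Nat.add_mod_right]
  -- E contains a cylinder around ω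
  obtain ⟨n₀', hn₀'⟩ := cylinder_sub Γ Γ.shift ω hωsh hEclopen.isOpen hωE
  set n₀ := n₀' + 1 with hn₀def
  have hn₀ : ∀ x, x ∈ Γ.shift → (∀ i, i < n₀ → x i = ω i) → x ∈ E := by
    intro x hx h
    exact hn₀' x hx (fun i hi => h i (by omega))
  -- ω is not isolated
  have hnear : ∀ n, ∃ x, x ∈ Γ.shift ∧ (∀ i, i < n → x i = ω i) ∧ x ≠ ω := by
    intro n
    by_contra hcon
    push_neg at hcon
    apply hiso ⟨ω, hωsh⟩
    have hset : ({⟨ω, hωsh⟩} : Set ↥Γ.shift)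
        = {y : ↥Γ.shift | ∀ i, i < n → (y : ℕ → Γ.E) i = ω i} := by
      ext y
      constructor
      · rintro rfl
        intro i _
        rfl
      · intro hy
        have := hcon (↑y) y.2 hy
        exact Subtype.ext this
    rw [hset]
    exact (cylOpen Γ ω n).preimage continuous_subtype_val
  -- pick a point witnessing properness and define the level a
  obtain ⟨x₁, hx₁sh, hx₁agr, hx₁ne⟩ := hnear n₀
  have hx₁p : ∃ p, x₁ p ≠ ω p := by
    by_contra hcon
    push_neg at hcon
    exact hx₁ne (funext hcon)
  obtain ⟨p, hp⟩ := hx₁p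
  set a := s + L * (p + n₀ + s + 1) with ha
  have hage : n₀ ≤ a ∧ s ≤ a ∧ p < a ∧ 1 ≤ a ∧ s + 1 ≤ a := by
    have h1 : p + n₀ + s + 1 ≤ L * (p + n₀ + s + 1) := Nat.le_mul_of_pos_left _ hL
    omega
  -- useful abbreviations
  have hωcone : ∀ n, ω ∈ Γ.cone (ppath Γ ω hωsh n) :=
    fun n => (mem_ppath_cone hωsh n ω).mpr ⟨hωsh, rfl, fun i _ => rfl⟩
  have hconeE : ∀ n, n₀ ≤ n → Γ.cone (ppath Γ ω hωsh n) ⊆ E := by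
    intro n hn x hx
    rw [mem_ppath_cone] at hx
    exact hn₀ x hx.1 (fun i hi => hx.2.2 i (lt_of_lt_of_le hi hn))
  have hx₁E : x₁ ∈ E := hn₀ x₁ hx₁sh hx₁agr
  have hx₁notin : ∀ n, p < n → x₁ ∉ Γ.cone (ppath Γ ω hωsh n) := by
    intro n hn hmem
    exact hp (((mem_ppath_cone hωsh n x₁).mp hmem).2.2 p hn)
  -- obtain f from the RSG property
  have hssα : Γ.cone (ppath Γ ω hωsh a) ⊂ E :=
    (Set.ssubset_iff_of_subset (hconeE a hage.1)).mpr ⟨x₁, hx₁E, hx₁notin a hage.2.2.1⟩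
  have hssβ : Γ.cone (ppath Γ ω hωsh (a + L)) ⊂ E :=
    (Set.ssubset_iff_of_subset (hconeE (a + L) (by omega))).mpr
      ⟨x₁, hx₁E, hx₁notin (a + L) (by omega)⟩
  have hend : Γ.pathEnd (ppath Γ ω hωsh a) = Γ.pathEnd (ppath Γ ω hωsh (a + L)) := by
    rw [ppath_end, ppath_end, hper a hage.2.1]
  obtain ⟨f, hfG, hfsim⟩ := hRSG.2 _ _ hend hssα hssβ
  -- single application of f on deep cylinders
  have hfstep : ∀ (x : ↥E) (m : ℕ), a ≤ m → (∀ i, i < m → (x : ℕ → Γ.E) i = ω i) →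
      (∀ i, i < m + L → (↑(f x) : ℕ → Γ.E) i = ω i) ∧
      (∀ i, (↑(f x) : ℕ → Γ.E) (i + (m + L)) = (x : ℕ → Γ.E) (i + m)) := by
    intro x m ham hagr
    have hmem : (x : ℕ → Γ.E) ∈ Γ.cone (ppath Γ ω hωsh a) :=
      (mem_ppath_cone hωsh a _).mpr ⟨hEsub x.2, by rw [hagr 0 (by omega)],
        fun i hi => hagr i (by omega)⟩
    have hfx := hfsim (↑x) x.2 hmem
    rw [Subtype.coe_eta] at hfx
    constructor
    · intro i hi
      rw [hfx, splice_ppath_eval]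
      by_cases hia : i < a + L
      · rw [if_pos hia]
      · rw [if_neg hia]
        have e : i - (a + L) + a = i - L := by omega
        rw [e, hagr _ (by omega)]
        have hpp := hper (i - L) (by omega)
        rw [← hpp]
        congr 1
        omega
    · intro i
      have hcond : ¬ (i + (m + L) < a + L) := by omega
      have e2 : i + (m + L) - (a + L) + a = i + m := by omega
      rw [hfx, splice_ppath_eval, if_neg hcond, e2]
  -- iterates of f on deep cylinders
  have hfpow : ∀ (k : ℕ) (x : ↥E) (m : ℕ), a ≤ m → (∀ i, i < m → (x : ℕ → Γ.E) i = ω i) →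
      (∀ i, i < m + k * L → (↑((f ^ k) x) : ℕ → Γ.E) i = ω i) ∧
      (∀ i, (↑((f ^ k) x) : ℕ → Γ.E) (i + (m + k * L)) = (x : ℕ → Γ.E) (i + m)) := by
    intro k
    induction k with
    | zero =>
        intro x m ham h
        simp only [pow_zero, Nat.zero_mul, Nat.add_zero]
        exact ⟨fun i hi => h i hi, fun i => rfl⟩
    | succ k ih =>
        intro x m ham h
        have hs1 := hfstep x m ham h
        have hk := ih (f x) (m + L) (by omega) hs1.1
        have hpow : ((f ^ (k + 1)) x) = (f ^ k) (f x) := by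
          rw [pow_succ, Equiv.Perm.mul_apply]
        have harith : m + (k + 1) * L = (m + L) + k * L := by ring
        rw [harith, hpow]
        exact ⟨hk.1, fun i => by rw [hk.2 i, hs1.2 i]⟩
  -- single inverse application of f
  have hfinv1 : ∀ (x : ↥E) (m : ℕ), a ≤ m → (∀ i, i < m + L → (x : ℕ → Γ.E) i = ω i) →
      (∀ i, i < m → (↑(f⁻¹ x) : ℕ → Γ.E) i = ω i) ∧
      (∀ i, (↑(f⁻¹ x) : ℕ → Γ.E) (i + m) = (x : ℕ → Γ.E) (i + m + L)) := by
    intro x m ham hagr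
    set z : ℕ → Γ.E := fun i => if i < m then ω i else (x : ℕ → Γ.E) (i + L) with hz
    have hxs : (x : ℕ → Γ.E) ∈ Γ.shift := hEsub x.2
    have hzsh : z ∈ Γ.shift := by
      intro i
      by_cases h1 : i + 1 < m
      · show Γ.t (z i) = Γ.o (z (i + 1))
        simp only [hz]
        rw [if_pos (by omega), if_pos h1]
        exact hωsh i
      · by_cases h2 : i < m
        · show Γ.t (z i) = Γ.o (z (i + 1))
          simp only [hz]
          rw [if_pos h2, if_neg h1]
          have hx' : (x : ℕ → Γ.E) (i + L) = ω (i + L) := hagr _ (by omega)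
          have hxsh2 : Γ.t ((x : ℕ → Γ.E) (i + L)) = Γ.o ((x : ℕ → Γ.E) (i + L + 1)) := hxs (i + L)
          rw [show i + 1 + L = i + L + 1 by ring, ← hxsh2, hx', hper i (by omega)]
        · show Γ.t (z i) = Γ.o (z (i + 1))
          simp only [hz]
          rw [if_neg h2, if_neg (by omega)]
          rw [show i + 1 + L = i + L + 1 by ring]
          exact hxs (i + L)
    have hzE : z ∈ E := by
      apply hn₀ z hzsh
      intro i hi
      simp only [hz]
      have hcond : i < m := by omega
      rw [if_pos hcond]
    have hzagr : ∀ i, i < m → z i = ω i := by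
      intro i hi
      simp only [hz]
      rw [if_pos hi]
    have hfz : f ⟨z, hzE⟩ = x := by
      have hs1 := hfstep ⟨z, hzE⟩ m ham hzagr
      apply Subtype.ext
      funext i
      by_cases hi : i < m + L
      · rw [hs1.1 i hi, hagr i hi]
      · have e1 : i = (i - (m + L)) + (m + L) := by omega
        rw [e1, hs1.2 (i - (m + L))]
        show z (i - (m + L) + m) = (x : ℕ → Γ.E) (i - (m + L) + (m + L))
        simp only [hz]
        have hcond : ¬ (i - (m + L) + m < m) := by omega
        have e2 : i - (m + L) + m + L = i - (m + L) + (m + L) := by omega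
        rw [if_neg hcond, e2]
    have hzinv : f⁻¹ x = ⟨z, hzE⟩ := by
      rw [← hfz]; exact Equiv.symm_apply_apply f _
    rw [hzinv]
    constructor
    · exact fun i hi => hzagr i hi
    · intro i
      show z (i + m) = (x : ℕ → Γ.E) (i + m + L)
      simp only [hz]
      have hcond : ¬ (i + m < m) := by omega
      rw [if_neg hcond]
  -- iterated inverses
  have hfinvpow : ∀ (k : ℕ) (x : ↥E) (m : ℕ), a ≤ m →
      (∀ i, i < m + k * L → (x : ℕ → Γ.E) i = ω i) →
      (∀ i, i < m → (↑((f ^ k)⁻¹ x) : ℕ → Γ.E) i = ω i) ∧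
      (∀ i, (↑((f ^ k)⁻¹ x) : ℕ → Γ.E) (i + m) = (x : ℕ → Γ.E) (i + m + k * L)) := by
    intro k
    induction k with
    | zero =>
        intro x m ham h
        simp only [pow_zero, inv_one, Equiv.Perm.coe_one, id_eq]
        constructor
        · intro i hi
          exact h i (by omega)
        · intro i
          show (x : ℕ → Γ.E) (i + m) = _
          rw [show i + m + 0 * L = i + m by ring]
    | succ k ih =>
        intro x m ham h
        have harith : m + (k + 1) * L = (m + L) + k * L := by ring
        have hk := ih x (m + L) (by omega) (fun i hi => h i (by omega))
        have hpow : ((f ^ (k + 1))⁻¹ x) = f⁻¹ ((f ^ k)⁻¹ x) := by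
          rw [pow_succ, mul_inv_rev, Equiv.Perm.mul_apply]
        rw [hpow]
        have hone := hfinv1 ((f ^ k)⁻¹ x) m ham hk.1
        constructor
        · exact hone.1
        · intro i
          rw [hone.2 i, show i + m + L = i + (m + L) by ring, hk.2 i,
            show i + (m + L) + k * L = i + m + (k + 1) * L by ring]
  -- f fixes ω
  have hffix : f ⟨ω, hωE⟩ = ⟨ω, hωE⟩ := by
    have hfx := hfsim ω hωE (hωcone a)
    apply Subtype.ext
    funext i
    rw [hfx, splice_ppath_eval]
    by_cases hia : i < a + L
    · rw [if_pos hia]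
    · rw [if_neg hia]
      have e : i - (a + L) + a = i - L := by omega
      rw [e]
      have hpp := hper (i - L) (by omega)
      rw [← hpp]
      congr 1
      omega
  -- powers fix ω
  have hfixpow : ∀ (g : Equiv.Perm ↥E), g ⟨ω, hωE⟩ = ⟨ω, hωE⟩ →
      ∀ k : ℕ, (g ^ k) ⟨ω, hωE⟩ = ⟨ω, hωE⟩ := by
    intro g hg k
    induction k with
    | zero => simp
    | succ k ih => rw [pow_succ, Equiv.Perm.mul_apply, hg, ih]
  -- nontriviality of germs of powers of f
  have hnontriv : ∀ (k : ℕ), 0 < k → ∀ (x : ↥E), (∀ i, i < a → (x : ℕ → Γ.E) i = ω i) →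
      (f ^ k) x = x → (x : ℕ → Γ.E) = ω := by
    intro k hk x hagr heq
    have h := hfpow k x a (le_refl a) hagr
    rw [heq] at h
    have hkL : L ≤ k * L := Nat.le_mul_of_pos_left _ hk
    have main : ∀ i, (x : ℕ → Γ.E) i = ω i := by
      intro i
      induction i using Nat.strong_induction_on with
      | _ i ih =>
        by_cases hi : i < a + k * L
        · exact h.1 i hi
        · have h2 := h.2 (i - (a + k * L))
          rw [show i - (a + k * L) + (a + k * L) = i by omega] at h2
          rw [show i - (a + k * L) + a = i - k * L by omega] at h2
          rw [h2, ih (i - k * L) (by omega)]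
          have hpa := per_add hper (i - k * L) (by omega) k
          rw [← hpa]
          congr 1
          omega
    exact funext main
  -- germ nontriviality, ℤ version
  have hgermf : ∀ k : ℤ, k ≠ 0 → ¬LocTrivAt (f ^ k) (⟨ω, hωE⟩ : ↥E) := by
    have hposcase : ∀ k : ℕ, 0 < k → ¬LocTrivAt (f ^ k) (⟨ω, hωE⟩ : ↥E) := by
      intro k hk
      rintro ⟨U, hUopen, hωU, hUtriv⟩
      obtain ⟨N, hN⟩ := cylinder_sub Γ E ω hωE hUopen hωU
      obtain ⟨x₂, hx₂sh, hx₂agr, hx₂ne⟩ := hnear (N + a + n₀)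
      have hx₂E : x₂ ∈ E := hn₀ x₂ hx₂sh (fun i hi => hx₂agr i (by omega))
      have hx₂U : (⟨x₂, hx₂E⟩ : ↥E) ∈ U := hN x₂ hx₂E (fun i hi => hx₂agr i (by omega))
      have := hUtriv _ hx₂U
      exact hx₂ne (hnontriv k hk ⟨x₂, hx₂E⟩ (fun i hi => hx₂agr i (by omega)) this)
    intro k hk hlt
    rcases lt_trichotomy k 0 with hneg | hzero | hpos
    · apply hposcase k.natAbs (by omega)
      obtain ⟨U, hU, hωU, htriv⟩ := hlt
      refine ⟨U, hU, hωU, fun u hu => ?_⟩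
      have h1 := htriv u hu
      have hzk : (f ^ k) = (f ^ (k.natAbs : ℕ))⁻¹ := by
        rw [← zpow_natCast f k.natAbs, ← zpow_neg, show -(k.natAbs : ℤ) = k by omega]
      rw [hzk] at h1
      conv_lhs => rw [← h1]
      exact Equiv.apply_symm_apply _ u
    · exact hk hzero
    · apply hposcase k.toNat (by omega)
      rw [show (f ^ (k.toNat : ℕ)) = f ^ k from by
        rw [← zpow_natCast f k.toNat, Int.toNat_of_nonneg (by omega)]]
      exact hlt
    -- evaluation of permExt on E
  have hPerm : ∀ (g : Equiv.Perm ↥E) (x : ℕ → Γ.E) (hx : x ∈ E),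
      Γ.permExt E g x = ↑(g ⟨x, hx⟩) := by
    intro g x hx
    show Γ.homExt E E (⇑g) x = _
    unfold FinDigraph.homExt
    rw [dif_pos hx]
  -- the agreement sets and bar lengths
  set SS : Equiv.Perm ↥E → ℕ → Set ℕ := fun g n =>
    {m | ∀ x ∈ Γ.cone (ppath Γ ω hωsh n), ∀ y ∈ Γ.cone (ppath Γ ω hωsh n),
      ∀ i < m, Γ.permExt E g x i = Γ.permExt E g y i} with hSS
  set Bf : Equiv.Perm ↥E → ℕ → ℕ :=
    fun g n => Γ.barLen (Γ.permExt E g) (ppath Γ ω hωsh n) with hBf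
  have hBsup : ∀ g n, Bf g n = sSup (SS g n) := fun g n => rfl
  have hgω : ∀ (g : Equiv.Perm ↥E), g ⟨ω, hωE⟩ = ⟨ω, hωE⟩ → Γ.permExt E g ω = ω := by
    intro g hg
    rw [hPerm g ω hωE, hg]
  have hconeagr : ∀ n x, x ∈ Γ.cone (ppath Γ ω hωsh n) → ∀ i, i < n → x i = ω i :=
    fun n x hx => ((mem_ppath_cone hωsh n x).mp hx).2.2
  have hS0 : ∀ g n, 0 ∈ SS g n := by
    intro g n
    simp only [hSS, Set.mem_setOf_eq]
    intro x _ y _ i hi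
    exact absurd hi (Nat.not_lt_zero i)
  have hSbdd : ∀ (g : Equiv.Perm ↥E), g ⟨ω, hωE⟩ = ⟨ω, hωE⟩ → ∀ n, a ≤ n →
      BddAbove (SS g n) := by
    intro g hg n hn
    obtain ⟨x₂, hx₂sh, hx₂agr, hx₂ne⟩ := hnear (n + n₀)
    have hx₂E : x₂ ∈ E := hn₀ x₂ hx₂sh (fun i hi => hx₂agr i (by omega))
    have hx₂cone : x₂ ∈ Γ.cone (ppath Γ ω hωsh n) :=
      (mem_ppath_cone hωsh n x₂).mpr ⟨hx₂sh, by rw [hx₂agr 0 (by omega)],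
        fun i hi => hx₂agr i (by omega)⟩
    have hne : Γ.permExt E g x₂ ≠ ω := by
      rw [hPerm g x₂ hx₂E]
      intro hcon
      have he : g ⟨x₂, hx₂E⟩ = g ⟨ω, hωE⟩ := by rw [hg]; exact Subtype.ext hcon
      have := g.injective he
      rw [Subtype.mk.injEq] at this
      exact hx₂ne this
    have hi₀ : ∃ i₀, Γ.permExt E g x₂ i₀ ≠ ω i₀ := by
      by_contra hcon
      push_neg at hcon
      exact hne (funext hcon)
    obtain ⟨i₀, hi₀⟩ := hi₀
    refine ⟨i₀, fun m hm => ?_⟩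
    by_contra hcon
    push_neg at hcon
    simp only [hSS, Set.mem_setOf_eq] at hm
    have := hm x₂ hx₂cone ω (hωcone n) i₀ hcon
    rw [hgω g hg] at this
    exact hi₀ this
  have hBmem : ∀ (g : Equiv.Perm ↥E), g ⟨ω, hωE⟩ = ⟨ω, hωE⟩ → ∀ n, a ≤ n →
      Bf g n ∈ SS g n := by
    intro g hg n hn
    rw [hBsup]
    exact Nat.sSup_mem ⟨0, hS0 g n⟩ (hSbdd g hg n hn)
  have hBagr : ∀ (g : Equiv.Perm ↥E), g ⟨ω, hωE⟩ = ⟨ω, hωE⟩ → ∀ n, a ≤ n →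
      ∀ x, x ∈ Γ.cone (ppath Γ ω hωsh n) → ∀ i, i < Bf g n → Γ.permExt E g x i = ω i := by
    intro g hg n hn x hx i hi
    have hmem := hBmem g hg n hn
    simp only [hSS, Set.mem_setOf_eq] at hmem
    have := hmem x hx ω (hωcone n) i hi
    rwa [hgω g hg] at this
  -- bar lengths tend to infinity (continuity)
  have hBbig : ∀ (g : Equiv.Perm ↥E), g ∈ G → g ⟨ω, hωE⟩ = ⟨ω, hωE⟩ →
      ∀ C, ∃ M, ∀ n, M ≤ n → a ≤ n → C ≤ Bf g n := by
    intro g hg hgfix C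
    have hcont : Continuous ⇑g := (hRSG.1 g hg).1
    have hVopen : IsOpen {y : ↥E | ∀ i, i < C → (y : ℕ → Γ.E) i = ω i} :=
      (cylOpen Γ ω C).preimage continuous_subtype_val
    have hpre : IsOpen (⇑g ⁻¹' {y : ↥E | ∀ i, i < C → (y : ℕ → Γ.E) i = ω i}) :=
      hVopen.preimage hcont
    have hωpre : (⟨ω, hωE⟩ : ↥E) ∈ ⇑g ⁻¹' {y : ↥E | ∀ i, i < C → (y : ℕ → Γ.E) i = ω i} := by
      show g ⟨ω, hωE⟩ ∈ {y : ↥E | ∀ i, i < C → (y : ℕ → Γ.E) i = ω i}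
      rw [hgfix]
      intro i _
      rfl
    obtain ⟨M, hM⟩ := cylinder_sub Γ E ω hωE hpre hωpre
    refine ⟨M, fun n hMn han => ?_⟩
    rw [hBsup]
    apply le_csSup (hSbdd g hgfix n han)
    simp only [hSS, Set.mem_setOf_eq]
    have hagr : ∀ u, u ∈ Γ.cone (ppath Γ ω hωsh n) → ∀ j, j < C → Γ.permExt E g u j = ω j := by
      intro u hu j hj
      have huE : u ∈ E := hconeE n (by omega) hu
      have hmem := hM u huE (fun i hi2 => hconeagr n u hu i (by omega))
      rw [hPerm g u huE]
      exact hmem j hj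
    intro x hx y hy i hi
    rw [hagr x hx i hi, hagr y hy i hi]
  -- reconstruction of g from its local action
  have hrecon : ∀ (g : Equiv.Perm ↥E), g ⟨ω, hωE⟩ = ⟨ω, hωE⟩ → ∀ n, a ≤ n →
      ∀ x (hx : x ∈ E), (∀ i, i < n → x i = ω i) → ∀ i,
      (↑(g ⟨x, hx⟩) : ℕ → Γ.E) i = if i < Bf g n then ω i
        else (Γ.localAction (Γ.permExt E g) (ppath Γ ω hωsh n)).2
          (fun j => x (j + n)) (i - Bf g n) := by
    intro g hgfix n hn x hx hagr i
    have hxsh : x ∈ Γ.shift := hEsub hx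
    have hxcone : x ∈ Γ.cone (ppath Γ ω hωsh n) :=
      (mem_ppath_cone hωsh n x).mpr ⟨hxsh, by rw [hagr 0 (by omega)], hagr⟩
    by_cases hi : i < Bf g n
    · rw [if_pos hi, ← hPerm g x hx]
      exact hBagr g hgfix n hn x hxcone i hi
    · rw [if_neg hi]
      have hw0sh : (fun j => x (j + n)) ∈ Γ.shift := by
        intro j
        show Γ.t (x (j + n)) = Γ.o (x (j + 1 + n))
        rw [show j + 1 + n = j + n + 1 by ring]
        exact hxsh (j + n)
      have hw0cone : (fun j => x (j + n)) ∈ Γ.cone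
          (Γ.trivPath (Γ.pathEnd (ppath Γ ω hωsh n))) := by
        rw [mem_triv_cone]
        refine ⟨hw0sh, ?_⟩
        rw [ppath_end]
        show Γ.o (x (0 + n)) = Γ.o (ω n)
        have h1 := hxsh (n - 1)
        have h2 := hωsh (n - 1)
        rw [show n - 1 + 1 = n by omega] at h1 h2
        rw [show (0 : ℕ) + n = n by omega, ← h1, hagr (n - 1) (by omega), h2]
      have hcat : Γ.catPath (ppath Γ ω hωsh n) (fun j => x (j + n)) = x := by
        funext j
        rw [catPath_ppath_eval]
        by_cases hj : j < n
        · rw [if_pos hj, hagr j hj]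
        · rw [if_neg hj]
          show x (j - n + n) = x j
          rw [show j - n + n = j by omega]
      show (↑(g ⟨x, hx⟩) : ℕ → Γ.E) i =
        (if (fun j => x (j + n)) ∈ Γ.cone (Γ.trivPath (Γ.pathEnd (ppath Γ ω hωsh n))) then
          (fun j => Γ.permExt E g (Γ.catPath (ppath Γ ω hωsh n) (fun j => x (j + n)))
            (j + Γ.barLen (Γ.permExt E g) (ppath Γ ω hωsh n)))
        else (fun j => x (j + n))) (i - Bf g n)
      rw [if_pos hw0cone]
      show _ = Γ.permExt E g (Γ.catPath (ppath Γ ω hωsh n) (fun j => x (j + n)))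
        (i - Bf g n + Γ.barLen (Γ.permExt E g) (ppath Γ ω hωsh n))
      rw [hcat, hPerm g x hx]
      have hBf2 : Γ.barLen (Γ.permExt E g) (ppath Γ ω hωsh n) = Bf g n := rfl
      rw [hBf2, show i - Bf g n + Bf g n = i by omega]
  -- pointwise action of integer powers of f
  have hshiftpt : ∀ (j : ℤ) (Y : ↥E) (m mm : ℕ), a ≤ m → a ≤ mm →
      (mm : ℤ) = (m : ℤ) + j * (L : ℤ) →
      (∀ i, i < m → (↑Y : ℕ → Γ.E) i = ω i) →
      (∀ i, i < mm → (↑((f ^ j) Y) : ℕ → Γ.E) i = ω i) ∧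
      (∀ i, (↑((f ^ j) Y) : ℕ → Γ.E) (i + mm) = (↑Y : ℕ → Γ.E) (i + m)) := by
    intro j Y m mm hm hmm hrel hagr
    cases j with
    | ofNat k =>
        have hkL : ((m + k * L : ℕ) : ℤ) = (m : ℤ) + (Int.ofNat k) * (L : ℤ) := by
          rw [Int.ofNat_eq_natCast]
          push_cast
          ring
        have hk : mm = m + k * L := by
          have h2 := hrel.trans hkL.symm
          exact_mod_cast h2
        rw [show f ^ (Int.ofNat k) = f ^ k from zpow_natCast f k, hk]
        exact hfpow k Y m hm hagr
    | negSucc k =>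
        have hkL : ((mm + (k + 1) * L : ℕ) : ℤ) = (mm : ℤ) - (Int.negSucc k) * (L : ℤ) := by
          rw [Int.negSucc_eq]
          push_cast
          ring
        have hk : m = mm + (k + 1) * L := by
          have h2 : ((mm + (k + 1) * L : ℕ) : ℤ) = (m : ℤ) := by
            rw [hkL, hrel]
            ring
          exact_mod_cast h2.symm
        rw [show f ^ (Int.negSucc k) = (f ^ (k + 1))⁻¹ from zpow_negSucc f k]
        have hfi := hfinvpow (k + 1) Y mm hmm (by rw [← hk]; exact hagr)
        exact ⟨hfi.1, fun i => by
          rw [hfi.2 i, show i + mm + (k + 1) * L = i + m by omega]⟩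
  -- local equality of permutations at ω
  set LEq : Equiv.Perm ↥E → Equiv.Perm ↥E → Prop := fun g₁ g₂ =>
    ∃ N, ∀ x (hx : x ∈ E), (∀ i, i < N → x i = ω i) → g₁ ⟨x, hx⟩ = g₂ ⟨x, hx⟩ with hLEq
  -- the core comparison lemma
  have hcore : ∀ (g₁ g₂ : Equiv.Perm ↥E),
      g₁ ⟨ω, hωE⟩ = ⟨ω, hωE⟩ → g₂ ⟨ω, hωE⟩ = ⟨ω, hωE⟩ →
      ∀ n₁ n₂, a ≤ n₁ → a ≤ n₂ → a ≤ Bf g₁ n₁ → a ≤ Bf g₂ n₂ →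
      (Γ.localAction (Γ.permExt E g₁) (ppath Γ ω hωsh n₁)).2
        = (Γ.localAction (Γ.permExt E g₂) (ppath Γ ω hωsh n₂)).2 →
      n₁ % L = n₂ % L → Bf g₁ n₁ % L = Bf g₂ n₂ % L →
      ∃ κ ε : ℤ, ε * (L : ℤ) = (n₂ : ℤ) - (n₁ : ℤ) ∧ LEq g₁ (f ^ κ * g₂ * f ^ ε) := by
    intro g₁ g₂ hfix₁ hfix₂ n₁ n₂ hn₁ hn₂ hb₁ hb₂ hQeq hnm hbm
    have hε : ∃ ε : ℤ, (n₂ : ℤ) = (n₁ : ℤ) + ε * (L : ℤ) := by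
      rcases le_total n₁ n₂ with hc | hc
      · obtain ⟨k, hk⟩ := modsub hc hnm.symm
        exact ⟨(k : ℤ), by rw [hk]; push_cast; ring⟩
      · obtain ⟨k, hk⟩ := modsub hc hnm
        exact ⟨-(k : ℤ), by rw [hk]; push_cast; ring⟩
    obtain ⟨ε, hεeq⟩ := hε
    have hκ : ∃ κ : ℤ, (Bf g₁ n₁ : ℤ) = (Bf g₂ n₂ : ℤ) + κ * (L : ℤ) := by
      rcases le_total (Bf g₂ n₂) (Bf g₁ n₁) with hc | hc
      · obtain ⟨k, hk⟩ := modsub hc hbm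
        exact ⟨(k : ℤ), by rw [hk]; push_cast; ring⟩
      · obtain ⟨k, hk⟩ := modsub hc hbm.symm
        exact ⟨-(k : ℤ), by rw [hk]; push_cast; ring⟩
    obtain ⟨κ, hκeq⟩ := hκ
    refine ⟨κ, ε, by linarith, ?_⟩
    simp only [hLEq]
    refine ⟨n₁ + n₂, fun x hx hagr => ?_⟩
    have hYfacts := hshiftpt ε ⟨x, hx⟩ (n₁ + n₂) (n₂ + n₂) (by omega) (by omega)
      (by push_cast; linarith) hagr
    set Y : ↥E := (f ^ ε) ⟨x, hx⟩ with hYdef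
    have htail : ∀ i, (↑Y : ℕ → Γ.E) (i + n₂) = x (i + n₁) := by
      refine helper_tail hL hper hYfacts.1 (fun i => hYfacts.2 i) hagr (by ring) hnm
        (by omega) (by omega) (by omega) (by omega)
    have hY1 : ∀ i, i < n₂ → (↑Y : ℕ → Γ.E) i = ω i := fun i hi => hYfacts.1 i (by omega)
    have hg2Y := hrecon g₂ hfix₂ n₂ hn₂ ↑Y Y.2 hY1
    have hg2Ycoe : ∀ i, (↑(g₂ Y) : ℕ → Γ.E) i = if i < Bf g₂ n₂ then ω i
        else (Γ.localAction (Γ.permExt E g₂) (ppath Γ ω hωsh n₂)).2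
          (fun j => (↑Y : ℕ → Γ.E) (j + n₂)) (i - Bf g₂ n₂) := by
      intro i
      have := hg2Y i
      rwa [Subtype.coe_eta] at this
    have hZfacts := hshiftpt κ (g₂ Y) (Bf g₂ n₂) (Bf g₁ n₁) hb₂ hb₁
      (by push_cast; linarith)
      (fun i hi => by rw [hg2Ycoe i, if_pos hi])
    set Z : ↥E := (f ^ κ) (g₂ Y) with hZdef
    have hfinal : ∀ i, (↑(g₁ ⟨x, hx⟩) : ℕ → Γ.E) i = (↑Z : ℕ → Γ.E) i := by
      intro i
      have hL1 := hrecon g₁ hfix₁ n₁ hn₁ x hx (fun j hj => hagr j (by omega)) i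
      by_cases hi : i < Bf g₁ n₁
      · rw [hL1, if_pos hi, hZfacts.1 i hi]
      · rw [hL1, if_neg hi]
        have e1 : i = (i - Bf g₁ n₁) + Bf g₁ n₁ := by omega
        conv_rhs => rw [e1]
        rw [hZfacts.2 (i - Bf g₁ n₁)]
        have hcond : ¬ ((i - Bf g₁ n₁) + Bf g₂ n₂ < Bf g₂ n₂) := by omega
        rw [hg2Ycoe ((i - Bf g₁ n₁) + Bf g₂ n₂), if_neg hcond,
          show (i - Bf g₁ n₁) + Bf g₂ n₂ - Bf g₂ n₂ = i - Bf g₁ n₁ by omega,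
          show (fun j => (↑Y : ℕ → Γ.E) (j + n₂)) = (fun j => x (j + n₁)) from funext htail,
          hQeq]
    have hRHS : (f ^ κ * g₂ * f ^ ε) ⟨x, hx⟩ = Z := by
      rw [Equiv.Perm.mul_apply, Equiv.Perm.mul_apply, ← hYdef, hZdef]
    rw [hRHS]
    exact Subtype.ext (funext hfinal)
    -- algebra of local equality
  have hLErefl : ∀ g, LEq g g := by
    intro g
    have hex : ∃ N, ∀ x (hx : x ∈ E), (∀ i, i < N → x i = ω i) → g ⟨x, hx⟩ = g ⟨x, hx⟩ :=
      ⟨0, fun x hx _ => rfl⟩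
    exact hex
  have hLEsymm : ∀ g₁ g₂, LEq g₁ g₂ → LEq g₂ g₁ := by
    intro g₁ g₂ h
    simp only [hLEq] at h ⊢
    obtain ⟨N, hN⟩ := h
    exact ⟨N, fun x hx hagr => (hN x hx hagr).symm⟩
  have hLEtrans : ∀ g₁ g₂ g₃, LEq g₁ g₂ → LEq g₂ g₃ → LEq g₁ g₃ := by
    intro g₁ g₂ g₃ h h'
    simp only [hLEq] at h h' ⊢
    obtain ⟨N, hN⟩ := h
    obtain ⟨N', hN'⟩ := h'
    exact ⟨max N N', fun x hx hagr =>
      (hN x hx (fun i hi => hagr i (by omega))).trans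
        (hN' x hx (fun i hi => hagr i (by omega)))⟩
  have hLEmulL : ∀ (g : Equiv.Perm ↥E) g₁ g₂, LEq g₁ g₂ → LEq (g * g₁) (g * g₂) := by
    intro g g₁ g₂ h
    simp only [hLEq] at h ⊢
    obtain ⟨N, hN⟩ := h
    exact ⟨N, fun x hx hagr => by
      rw [Equiv.Perm.mul_apply, Equiv.Perm.mul_apply, hN x hx hagr]⟩
  have hLEmulR : ∀ g₁ g₂, LEq g₁ g₂ → ∀ j : ℤ, LEq (g₁ * f ^ j) (g₂ * f ^ j) := by
    intro g₁ g₂ h j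
    simp only [hLEq] at h ⊢
    obtain ⟨N, hN⟩ := h
    cases j with
    | ofNat k =>
        refine ⟨a + N, fun x hx hagr => ?_⟩
        rw [show f ^ (Int.ofNat k) = f ^ k from zpow_natCast f k]
        rw [Equiv.Perm.mul_apply, Equiv.Perm.mul_apply]
        have hfp := hfpow k ⟨x, hx⟩ (a + N) (by omega) hagr
        have hres := hN ↑((f ^ k) ⟨x, hx⟩) ((f ^ k) ⟨x, hx⟩).2
          (fun i hi => hfp.1 i (by omega))
        rwa [Subtype.coe_eta] at hres
    | negSucc k =>
        refine ⟨a + N + (k + 1) * L, fun x hx hagr => ?_⟩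
        rw [show f ^ (Int.negSucc k) = (f ^ (k + 1))⁻¹ from zpow_negSucc f k]
        rw [Equiv.Perm.mul_apply, Equiv.Perm.mul_apply]
        have hfp := hfinvpow (k + 1) ⟨x, hx⟩ (a + N) (by omega)
          (fun i hi => hagr i (by omega))
        have hres := hN ↑((f ^ (k + 1))⁻¹ ⟨x, hx⟩) ((f ^ (k + 1))⁻¹ ⟨x, hx⟩).2
          (fun i hi => hfp.1 i (by omega))
        rwa [Subtype.coe_eta] at hres
  have hLEtoTriv : ∀ g₁ g₂, LEq g₁ g₂ → LocTrivAt (g₂⁻¹ * g₁) (⟨ω, hωE⟩ : ↥E) := by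
    intro g₁ g₂ h
    simp only [hLEq] at h
    obtain ⟨N, hN⟩ := h
    refine ⟨{y : ↥E | ∀ i, i < N → (y : ℕ → Γ.E) i = ω i},
      (cylOpen Γ ω N).preimage continuous_subtype_val, fun i _ => rfl, ?_⟩
    intro u hu
    have he := hN ↑u u.2 hu
    rw [Subtype.coe_eta] at he
    rw [Equiv.Perm.mul_apply, he]
    exact Equiv.symm_apply_apply g₂ u
  -- the data attached to a stabilizer element
  set Good : Equiv.Perm ↥E → ((Γ.V × ((ℕ → Γ.E) → ℕ → Γ.E)) × ℕ × ℕ) → Prop := fun g q =>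
    ∀ m : ℕ, ∃ n, m ≤ n ∧ a ≤ n ∧
      Γ.localAction (Γ.permExt E g) (ppath Γ ω hωsh n) = q.1 ∧
      Bf g n % L = q.2.1 ∧ n % L = q.2.2 with hGood
  have hcount : ∀ (g : Equiv.Perm ↥E), g ∈ G → g ⟨ω, hωE⟩ = ⟨ω, hωE⟩ →
      ∃ q, (q.1 ∈ Γ.groupNucleus E G ∧ q.2.1 < L ∧ q.2.2 < L) ∧ Good g q := by
    intro g hg hgfix
    have hrat : (Γ.localAction (Γ.permExt E g) '' {α : Γ.FinPath | Γ.cone α ⊆ E}).Finite :=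
      (hRSG.1 g hg).2.2
    have himg : ((fun n => (Γ.localAction (Γ.permExt E g) (ppath Γ ω hωsh n),
        Bf g n % L, n % L)) '' (Set.Ici a)).Finite := by
      apply Set.Finite.subset (hrat.prod ((Set.finite_Iio L).prod (Set.finite_Iio L)))
      rintro _ ⟨n, hn, rfl⟩
      simp only [Set.mem_Ici] at hn
      exact ⟨⟨ppath Γ ω hωsh n, hconeE n (by omega), rfl⟩,
        Nat.mod_lt _ hL, Nat.mod_lt _ hL⟩
    have hinf : (Set.Ici a).Infinite := Set.Ici_infinite a
    obtain ⟨q, hq⟩ := exists_infinite_fiber _ _ hinf himg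
    refine ⟨q, ⟨?_, ?_, ?_⟩, ?_⟩
    · have hsub : (fun n => ppath Γ ω hωsh n) '' {n | n ∈ Set.Ici a ∧
          (Γ.localAction (Γ.permExt E g) (ppath Γ ω hωsh n), Bf g n % L, n % L) = q}
          ⊆ {α : Γ.FinPath | Γ.cone α ⊆ E ∧ Γ.localAction (Γ.permExt E g) α = q.1} := by
        rintro _ ⟨n, ⟨hn, hΦ⟩, rfl⟩
        simp only [Set.mem_Ici] at hn
        exact ⟨hconeE n (by omega), by rw [← hΦ]⟩
      have hinj : Set.InjOn (fun n => ppath Γ ω hωsh n) {n | n ∈ Set.Ici a ∧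
          (Γ.localAction (Γ.permExt E g) (ppath Γ ω hωsh n), Bf g n % L, n % L) = q} :=
        fun n₁ _ n₂ _ he => ppath_inj hωsh he
      have hinfset := Set.Infinite.mono hsub (hq.image hinj)
      exact Set.mem_biUnion hg hinfset
    · obtain ⟨n, hn⟩ := hq.nonempty
      have h21 : q.2.1 = Bf g n % L := by rw [← hn.2]
      rw [h21]
      exact Nat.mod_lt _ hL
    · obtain ⟨n, hn⟩ := hq.nonempty
      have h22 : q.2.2 = n % L := by rw [← hn.2]
      rw [h22]
      exact Nat.mod_lt _ hL
    · simp only [hGood]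
      intro m
      obtain ⟨n, hnfib, hmn⟩ := infinite_exists_ge hq m
      obtain ⟨hn, hΦ⟩ := hnfib
      simp only [Set.mem_Ici] at hn
      exact ⟨n, hmn, hn, by rw [← hΦ], by rw [← hΦ], by rw [← hΦ]⟩
  -- skolemized representatives
  have hbig : ∀ q : ((Γ.V × ((ℕ → Γ.E) → ℕ → Γ.E)) × ℕ × ℕ),
      ∃ (u : Equiv.Perm ↥E) (d μ : ℤ),
        (∃ g, g ∈ G ∧ g ⟨ω, hωE⟩ = ⟨ω, hωE⟩ ∧ Good g q) →
        (u ∈ G ∧ u ⟨ω, hωE⟩ = ⟨ω, hωE⟩ ∧ 0 < d ∧ LEq u (f ^ μ * u * f ^ (-d)) ∧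
          ∀ h : Equiv.Perm ↥E, h ∈ G → h ⟨ω, hωE⟩ = ⟨ω, hωE⟩ → Good h q →
            ∃ κ ε : ℤ, LEq h (f ^ κ * u * f ^ ε)) := by
    intro q
    by_cases hq : ∃ g, g ∈ G ∧ g ⟨ω, hωE⟩ = ⟨ω, hωE⟩ ∧ Good g q
    · obtain ⟨u, huG, hufix, huGood⟩ := hq
      have huGood' := huGood
      simp only [hGood] at huGood'
      obtain ⟨Mu, hMu⟩ := hBbig u huG hufix a
      obtain ⟨nu, hnu1, hnu2, hnu3, hnu4, hnu5⟩ := huGood' (Mu + a)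
      obtain ⟨nu', hnu'1, hnu'2, hnu'3, hnu'4, hnu'5⟩ := huGood' (nu + 1)
      have hBnu : a ≤ Bf u nu := hMu nu (by omega) hnu2
      have hBnu' : a ≤ Bf u nu' := hMu nu' (by omega) hnu'2
      obtain ⟨κ₀, ε₀, hεL, hrel⟩ := hcore u u hufix hufix nu' nu hnu'2 hnu2 hBnu' hBnu
        (by rw [hnu'3, hnu3]) (by rw [hnu'5, hnu5]) (by rw [hnu'4, hnu4])
      have hlt : (nu : ℤ) - (nu' : ℤ) < 0 := by
        have hx2 : nu < nu' := by omega
        push_cast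
        omega
      have hεneg : ε₀ < 0 := by
        by_contra hcon
        push_neg at hcon
        have hnn : (0 : ℤ) ≤ ε₀ * (L : ℤ) :=
          mul_nonneg hcon (by exact_mod_cast Nat.zero_le L)
        linarith
      refine ⟨u, -ε₀, κ₀, fun _ => ⟨huG, hufix, by omega, ?_, ?_⟩⟩
      · rw [neg_neg]
        exact hrel
      · intro h hhG hhfix hhGood
        simp only [hGood] at hhGood
        obtain ⟨Mh, hMh⟩ := hBbig h hhG hhfix a
        obtain ⟨nh, hnh1, hnh2, hnh3, hnh4, hnh5⟩ := hhGood (Mh + a)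
        have hBnh : a ≤ Bf h nh := hMh nh (by omega) hnh2
        obtain ⟨κ, ε, _, hrel'⟩ := hcore h u hhfix hufix nh nu hnh2 hnu2 hBnh hBnu
          (by rw [hnh3, hnu3]) (by rw [hnh5, hnu5]) (by rw [hnh4, hnu4])
        exact ⟨κ, ε, hrel'⟩
    · exact ⟨1, 1, 0, fun hcon => absurd hcon hq⟩
  choose uF dF μF hF using hbig
  -- commuting f-powers past a representative
  have hshiftLE : ∀ (u : Equiv.Perm ↥E) (d μ : ℤ), LEq u (f ^ μ * u * f ^ (-d)) →
      ∀ t : ℤ, LEq (u * f ^ (d * t)) (f ^ (μ * t) * u) := by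
    intro u d μ hbase
    have hstep1 : LEq (u * f ^ d) (f ^ μ * u) := by
      have h1 := hLEmulR _ _ hbase d
      have he : (f ^ μ * u * f ^ (-d)) * f ^ d = f ^ μ * u := by group
      rwa [he] at h1
    have hstep2 : LEq (u * f ^ (-d)) (f ^ (-μ) * u) := by
      have h1 := hLEmulL (f ^ (-μ)) _ _ hbase
      have he : f ^ (-μ) * (f ^ μ * u * f ^ (-d)) = u * f ^ (-d) := by group
      rw [he] at h1
      exact hLEsymm _ _ h1
    intro t
    induction t using Int.induction_on with
    | zero => simpa using hLErefl u
    | succ t ih =>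
        have he1 : u * f ^ (d * ((t : ℤ) + 1)) = (u * f ^ (d * (t : ℤ))) * f ^ d := by group
        have he2 : (f ^ (μ * (t : ℤ)) * u) * f ^ d = f ^ (μ * (t : ℤ)) * (u * f ^ d) := by group
        have he3 : f ^ (μ * (t : ℤ)) * (f ^ μ * u) = f ^ (μ * ((t : ℤ) + 1)) * u := by group
        rw [he1]
        refine hLEtrans _ _ _ (hLEmulR _ _ ih d) ?_
        rw [he2]
        refine hLEtrans _ _ _ (hLEmulL _ _ _ hstep1) ?_
        rw [he3]
        exact hLErefl _
    | pred t ih =>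
        have he1 : u * f ^ (d * (-(t : ℤ) - 1)) = (u * f ^ (d * (-(t : ℤ)))) * f ^ (-d) := by
          group
        have he2 : (f ^ (μ * (-(t : ℤ))) * u) * f ^ (-d)
            = f ^ (μ * (-(t : ℤ))) * (u * f ^ (-d)) := by group
        have he3 : f ^ (μ * (-(t : ℤ))) * (f ^ (-μ) * u) = f ^ (μ * (-(t : ℤ) - 1)) * u := by
          group
        rw [he1]
        refine hLEtrans _ _ _ (hLEmulR _ _ ih (-d)) ?_
        rw [he2]
        refine hLEtrans _ _ _ (hLEmulL _ _ _ hstep2) ?_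
        rw [he3]
        exact hLErefl _
  -- final assembly
  refine ⟨f, hfG, hffix, hgermf, ?_⟩
  set Treal : Set ((Γ.V × ((ℕ → Γ.E) → ℕ → Γ.E)) × ℕ × ℕ) :=
    {q | (q.1 ∈ Γ.groupNucleus E G ∧ q.2.1 < L ∧ q.2.2 < L) ∧
      ∃ g, g ∈ G ∧ g ⟨ω, hωE⟩ = ⟨ω, hωE⟩ ∧ Good g q} with hTreal
  have hTfin : Treal.Finite := by
    apply Set.Finite.subset (hnuc.prod ((Set.finite_Iio L).prod (Set.finite_Iio L)))
    rintro q ⟨⟨h1, h2, h3⟩, _⟩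
    exact ⟨h1, h2, h3⟩
  refine ⟨⋃ q ∈ Treal, (fun j : ℕ => uF q * f ^ j) '' (Set.Iio (dF q).toNat), ?_, ?_, ?_⟩
  · exact hTfin.biUnion (fun q _ => (Set.finite_Iio _).image _)
  · intro v hv
    simp only [Set.mem_iUnion, Set.mem_image, Set.mem_Iio] at hv
    obtain ⟨q, hqT, j, hj, rfl⟩ := hv
    simp only [hTreal, Set.mem_setOf_eq] at hqT
    obtain ⟨huG, hufix, _, _, _⟩ := hF q hqT.2
    exact ⟨G.mul_mem huG (Subgroup.pow_mem G hfG j), by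
      rw [Equiv.Perm.mul_apply, hfixpow f hffix j, hufix]⟩
  · intro h hhG hhfix
    obtain ⟨q, hqb, hqGood⟩ := hcount h hhG hhfix
    have hex : ∃ g, g ∈ G ∧ g ⟨ω, hωE⟩ = ⟨ω, hωE⟩ ∧ Good g q := ⟨h, hhG, hhfix, hqGood⟩
    have hqT : q ∈ Treal := by
      simp only [hTreal, Set.mem_setOf_eq]
      exact ⟨hqb, hex⟩
    obtain ⟨huG, hufix, hdpos, hbase, hcomp⟩ := hF q hex
    obtain ⟨κ, ε, hrel⟩ := hcomp h hhG hhfix hqGood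
    obtain ⟨t, e', hde, he'0, he'lt⟩ : ∃ t e' : ℤ, dF q * t + e' = ε ∧ 0 ≤ e' ∧ e' < dF q :=
      ⟨ε / dF q, ε % dF q, Int.mul_ediv_add_emod ε (dF q),
        Int.emod_nonneg ε (by omega), Int.emod_lt_of_pos ε hdpos⟩
    have hsh := hshiftLE (uF q) (dF q) (μF q) hbase t
    have he1 : f ^ κ * uF q * f ^ ε
        = f ^ κ * ((uF q * f ^ (dF q * t)) * f ^ e') := by
      rw [← hde]
      group
    have hrel2 : LEq h (f ^ (κ + μF q * t) * (uF q * f ^ e')) := by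
      have hstep : LEq h (f ^ κ * ((f ^ (μF q * t) * uF q) * f ^ e')) := by
        refine hLEtrans _ _ _ hrel ?_
        rw [he1]
        exact hLEmulL _ _ _ (hLEmulR _ _ hsh e')
      have he2 : f ^ κ * ((f ^ (μF q * t) * uF q) * f ^ e')
          = f ^ (κ + μF q * t) * (uF q * f ^ e') := by group
      rwa [he2] at hstep
    refine ⟨κ + μF q * t, uF q * f ^ e'.toNat, ?_, ?_⟩
    · apply Set.mem_biUnion hqT
      exact ⟨e'.toNat, by simp only [Set.mem_Iio]; omega, rfl⟩
    · apply hLEtoTriv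
      have hcast : uF q * f ^ (e'.toNat) = uF q * f ^ e' := by
        rw [← zpow_natCast f e'.toNat, Int.toNat_of_nonneg he'0]
      rw [hcast]
      exact hrel2

end
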